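/- Let 0 < s < 1 and 1 < p < ∞. There is a constant C = C(n,s,p) > 0 such that for every closed cube Q ⊂ ℝⁿ with side length ℓ(Q) and every u ∈ L^p(Q), one has ∫_Q | u(x) − ⨍_{2^{-1}Q} u(y) dy |^p dx ≤ C ℓ(Q)^{sp} ∫_Q ∫_Q |u(x) − u(y)|^p / |x−y|^{n+sp} dy dx. -/

import Mathlib

open MeasureTheory Metric
open scoped ENNReal

/-- The closed cube with center `c` and side length `ℓ`. -/
def closedCube {n : ℕ} (c : EuclideanSpace ℝ (Fin n)) (ℓ : ℝ) :
    Set (EuclideanSpace ℝ (Fin n)) :=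
  {x | ∀ i : Fin n, |x i - c i| ≤ ℓ / 2}

/-- Let `0 < s < 1` and `1 < p < ∞`. There is `C = C(n,s,p) > 0` such that for every closed
cube `Q ⊆ ℝⁿ` with side length `ℓ(Q)` and every `u ∈ L^p(Q)`,
`∫_Q |u(x) − ⨍_{2⁻¹Q} u|^p dx ≤ C ℓ(Q)^{sp} ∫_Q ∫_Q |u(x) − u(y)|^p / |x−y|^{n+sp} dy dx`. -/
lemma closedCube_eq_preimage {n : ℕ} (c : EuclideanSpace ℝ (Fin n)) (ℓ : ℝ) :
    closedCube c ℓ = (MeasurableEquiv.toLp 2 (Fin n → ℝ)).symm ⁻¹'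
      (Set.univ.pi fun i => Set.Icc (c i - ℓ / 2) (c i + ℓ / 2)) := by
  ext x
  simp only [closedCube, Set.mem_setOf_eq, Set.mem_preimage, Set.mem_univ_pi, Set.mem_Icc]
  refine forall_congr' fun i => ?_
  have hxi : (MeasurableEquiv.toLp 2 (Fin n → ℝ)).symm x i = x i := rfl
  rw [hxi, abs_sub_le_iff]
  constructor <;> intro h <;> constructor <;> [skip; skip; skip; skip] <;> linarith [h.1, h.2]

lemma measurableSet_closedCube {n : ℕ} (c : EuclideanSpace ℝ (Fin n)) (ℓ : ℝ) :
    MeasurableSet (closedCube c ℓ) := by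
  rw [closedCube_eq_preimage]
  exact (MeasurableEquiv.toLp 2 (Fin n → ℝ)).symm.measurable
    (MeasurableSet.univ_pi fun i => measurableSet_Icc)

lemma volume_closedCube {n : ℕ} (c : EuclideanSpace ℝ (Fin n)) {ℓ : ℝ} (hℓ : 0 ≤ ℓ) :
    volume (closedCube c ℓ) = ENNReal.ofReal (ℓ ^ n) := by
  rw [closedCube_eq_preimage,
    (EuclideanSpace.volume_preserving_symm_measurableEquiv_toLp (Fin n)).measure_preimage
      ((MeasurableSet.univ_pi fun i => measurableSet_Icc).nullMeasurableSet),
    volume_pi_pi]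
  have : ∀ i : Fin n, c i + ℓ / 2 - (c i - ℓ / 2) = ℓ := fun i => by ring
  simp [Real.volume_Icc, this, Finset.prod_const, ENNReal.ofReal_pow hℓ]

lemma lintegral_rpow_le_aux {α : Type*} {m : MeasurableSpace α} (ν : Measure α)
    [IsProbabilityMeasure ν] {f : α → ℝ≥0∞} (hf : AEMeasurable f ν) {p : ℝ} (hp : 1 < p) :
    (∫⁻ a, f a ∂ν) ^ p ≤ ∫⁻ a, f a ^ p ∂ν := by
  have hp0 : 0 < p := lt_trans one_pos hp
  have hpq : p.HolderConjugate (Real.conjExponent p) := Real.HolderConjugate.conjExponent hp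
  have h := ENNReal.lintegral_mul_le_Lp_mul_Lq ν hpq hf aemeasurable_const (g := fun _ => 1)
  simp only [mul_one, ENNReal.one_rpow, lintegral_const, measure_univ, one_mul,
    ENNReal.one_rpow, Pi.mul_apply] at h
  calc (∫⁻ a, f a ∂ν) ^ p ≤ ((∫⁻ a, f a ^ p ∂ν) ^ (1 / p)) ^ p := by
        exact ENNReal.rpow_le_rpow h hp0.le
    _ = ∫⁻ a, f a ^ p ∂ν := by
        rw [← ENNReal.rpow_mul, one_div, inv_mul_cancel₀ hp0.ne', ENNReal.rpow_one]
  
lemma dist_le_of_mem_closedCube {n : ℕ} {c : EuclideanSpace ℝ (Fin n)} {ℓ : ℝ} (hℓ : 0 ≤ ℓ)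
    {x y : EuclideanSpace ℝ (Fin n)} (hx : x ∈ closedCube c ℓ) (hy : y ∈ closedCube c ℓ) :
    dist x y ≤ Real.sqrt (n + 1) * ℓ := by
  rw [EuclideanSpace.dist_eq]
  have h1 : ∑ i, dist (x i) (y i) ^ 2 ≤ (n + 1) * ℓ ^ 2 := by
    calc ∑ i, dist (x i) (y i) ^ 2 ≤ ∑ _i : Fin n, ℓ ^ 2 := by
          refine Finset.sum_le_sum fun i _ => ?_
          have : dist (x i) (y i) ≤ ℓ := by
            rw [Real.dist_eq]
            have h1 := hx i; have h2 := hy i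
            rw [abs_sub_le_iff] at h1 h2 ⊢
            constructor <;> linarith [h1.1, h1.2, h2.1, h2.2]
          exact pow_le_pow_left₀ dist_nonneg this 2
      _ = n * ℓ ^ 2 := by simp [Finset.sum_const]
      _ ≤ (n + 1) * ℓ ^ 2 := by nlinarith [sq_nonneg ℓ]
  calc Real.sqrt (∑ i, dist (x i) (y i) ^ 2) ≤ Real.sqrt ((n + 1) * ℓ ^ 2) :=
        Real.sqrt_le_sqrt h1
    _ = Real.sqrt (n + 1) * ℓ := by
        rw [Real.sqrt_mul (by positivity), Real.sqrt_sq hℓ]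

theorem fractional_poincare_on_cube (n : ℕ) (s p : ℝ)
    (hs : 0 < s) (hs1 : s < 1) (hp : 1 < p) :
    ∃ C : ℝ, 0 < C ∧
      ∀ (c : EuclideanSpace ℝ (Fin n)) (ℓ : ℝ), 0 < ℓ →
        ∀ u : EuclideanSpace ℝ (Fin n) → ℝ,
          MemLp u (ENNReal.ofReal p) (volume.restrict (closedCube c ℓ)) →
          (∫⁻ x in closedCube c ℓ,
              ENNReal.ofReal (|u x - ⨍ y in closedCube c (ℓ / 2), u y| ^ p)) ≤
            ENNReal.ofReal (C * ℓ ^ (s * p)) *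
              ∫⁻ x in closedCube c ℓ, ∫⁻ y in closedCube c ℓ,
                ENNReal.ofReal (|u x - u y| ^ p / dist x y ^ ((n : ℝ) + s * p)) := by
  have hp0 : 0 < p := lt_trans one_pos hp
  set K := Real.sqrt (n + 1) with hKdef
  have hK0 : 0 < K := Real.sqrt_pos.2 (by positivity)
  set e := (n : ℝ) + s * p with hedef
  have he0 : 0 < e := by rw [hedef]; positivity
  refine ⟨2 ^ n * K ^ e, by positivity, ?_⟩
  intro c ℓ hℓ u hu
  set Q := closedCube c ℓ with hQ
  set Q' := closedCube c (ℓ / 2) with hQ'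
  have hQ'Q : Q' ⊆ Q := fun x hx i => le_trans (hx i) (by linarith)
  have hvolQ : volume Q = ENNReal.ofReal (ℓ ^ n) := volume_closedCube c hℓ.le
  have hvolQ' : volume Q' = ENNReal.ofReal ((ℓ / 2) ^ n) := volume_closedCube c (by linarith)
  have hm0 : volume Q' ≠ 0 := by
    rw [hvolQ', Ne, ENNReal.ofReal_eq_zero, not_le]; positivity
  have hmtop : volume Q' ≠ ⊤ := by rw [hvolQ']; exact ENNReal.ofReal_ne_top
  haveI hfinQ : IsFiniteMeasure (volume.restrict Q) :=
    ⟨by rw [Measure.restrict_apply_univ, hvolQ]; exact ENNReal.ofReal_lt_top⟩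
  have hp1 : (1 : ℝ≥0∞) ≤ ENNReal.ofReal p := by
    rw [← ENNReal.ofReal_one]; exact ENNReal.ofReal_le_ofReal hp.le
  have huint : IntegrableOn u Q := hu.integrable hp1
  have huint' : IntegrableOn u Q' := huint.mono_set hQ'Q
  set ν : Measure (EuclideanSpace ℝ (Fin n)) := (volume Q')⁻¹ • volume.restrict Q' with hν
  haveI hprob : IsProbabilityMeasure ν := ⟨by
    rw [hν, Measure.smul_apply, Measure.restrict_apply_univ, smul_eq_mul,
      ENNReal.inv_mul_cancel hm0 hmtop]⟩
  have huν : Integrable u ν := huint'.smul_measure (ENNReal.inv_ne_top.2 hm0)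
  set A := ⨍ y in Q', u y with hA
  have hAν : A = ∫ y, u y ∂ν := by rw [hA, setAverage_eq']
  have key1 : ∀ x, ENNReal.ofReal (|u x - A| ^ p)
      ≤ (volume Q')⁻¹ * ∫⁻ y in Q', ENNReal.ofReal (|u x - u y| ^ p) := by
    intro x
    have hintx : Integrable (fun y => |u x - u y|) ν := ((integrable_const (u x)).sub huν).abs
    have step1 : |u x - A| ≤ ∫ y, |u x - u y| ∂ν := by
      have h1 : u x - A = ∫ y, (u x - u y) ∂ν := by
        rw [hAν, integral_sub (integrable_const _) huν, integral_const, probReal_univ]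
        simp
      rw [h1]
      simpa [Real.norm_eq_abs] using
        norm_integral_le_integral_norm (μ := ν) (fun y => u x - u y)
    have hmeas : AEMeasurable (fun y => ENNReal.ofReal (|u x - u y|)) ν :=
      ENNReal.measurable_ofReal.comp_aemeasurable
        (continuous_abs.measurable.comp_aemeasurable (aemeasurable_const.sub huν.aemeasurable))
    calc ENNReal.ofReal (|u x - A| ^ p)
        = ENNReal.ofReal (|u x - A|) ^ p :=
          (ENNReal.ofReal_rpow_of_nonneg (abs_nonneg _) hp0.le).symm
      _ ≤ ENNReal.ofReal (∫ y, |u x - u y| ∂ν) ^ p :=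
          ENNReal.rpow_le_rpow (ENNReal.ofReal_le_ofReal step1) hp0.le
      _ = (∫⁻ y, ENNReal.ofReal (|u x - u y|) ∂ν) ^ p := by
          rw [ofReal_integral_eq_lintegral_ofReal hintx
            (Filter.Eventually.of_forall fun y => abs_nonneg _)]
      _ ≤ ∫⁻ y, (ENNReal.ofReal (|u x - u y|)) ^ p ∂ν :=
          lintegral_rpow_le_aux ν hmeas hp
      _ = ∫⁻ y, ENNReal.ofReal (|u x - u y| ^ p) ∂ν :=
          lintegral_congr fun y =>
            ENNReal.ofReal_rpow_of_nonneg (abs_nonneg _) hp0.le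
      _ = (volume Q')⁻¹ * ∫⁻ y in Q', ENNReal.ofReal (|u x - u y| ^ p) := by
          rw [hν, lintegral_smul_measure, smul_eq_mul]
  have hEm : (volume Q')⁻¹ ≠ ⊤ := ENNReal.inv_ne_top.2 hm0
  have key2 : ∀ x ∈ Q, (∫⁻ y in Q', ENNReal.ofReal (|u x - u y| ^ p))
      ≤ ENNReal.ofReal ((K * ℓ) ^ e) *
        ∫⁻ y in Q, ENNReal.ofReal (|u x - u y| ^ p / dist x y ^ e) := by
    intro x hx
    calc (∫⁻ y in Q', ENNReal.ofReal (|u x - u y| ^ p))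
        ≤ ∫⁻ y in Q, ENNReal.ofReal (|u x - u y| ^ p) :=
          lintegral_mono' (Measure.restrict_mono hQ'Q le_rfl) le_rfl
      _ ≤ ∫⁻ y in Q, ENNReal.ofReal ((K * ℓ) ^ e * (|u x - u y| ^ p / dist x y ^ e)) := by
          refine lintegral_mono_ae ((ae_restrict_iff' (measurableSet_closedCube c ℓ)).2
            (Filter.Eventually.of_forall fun y hy => ?_))
          refine ENNReal.ofReal_le_ofReal ?_
          by_cases hd : dist x y = 0
          · have hxy : x = y := by rwa [dist_eq_zero] at hd
            rw [hxy, sub_self, abs_zero, Real.zero_rpow hp0.ne']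
            positivity
          · have hd0 : 0 < dist x y := lt_of_le_of_ne dist_nonneg (Ne.symm hd)
            have hde : 0 < dist x y ^ e := Real.rpow_pos_of_pos hd0 e
            have hdle : dist x y ^ e ≤ (K * ℓ) ^ e :=
              Real.rpow_le_rpow dist_nonneg (dist_le_of_mem_closedCube hℓ.le hx hy) he0.le
            calc |u x - u y| ^ p
                = |u x - u y| ^ p / dist x y ^ e * dist x y ^ e := by field_simp
              _ ≤ |u x - u y| ^ p / dist x y ^ e * ((K * ℓ) ^ e) :=
                  mul_le_mul_of_nonneg_left hdle (by positivity)
              _ = (K * ℓ) ^ e * (|u x - u y| ^ p / dist x y ^ e) := by ring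
      _ = ∫⁻ y in Q, ENNReal.ofReal ((K * ℓ) ^ e) *
            ENNReal.ofReal (|u x - u y| ^ p / dist x y ^ e) :=
          lintegral_congr fun y => ENNReal.ofReal_mul (by positivity)
      _ = ENNReal.ofReal ((K * ℓ) ^ e) *
            ∫⁻ y in Q, ENNReal.ofReal (|u x - u y| ^ p / dist x y ^ e) :=
          lintegral_const_mul' _ _ ENNReal.ofReal_ne_top
  calc (∫⁻ x in Q, ENNReal.ofReal (|u x - A| ^ p))
      ≤ ∫⁻ x in Q, (volume Q')⁻¹ * ∫⁻ y in Q', ENNReal.ofReal (|u x - u y| ^ p) :=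
        lintegral_mono fun x => key1 x
    _ = (volume Q')⁻¹ * ∫⁻ x in Q, ∫⁻ y in Q', ENNReal.ofReal (|u x - u y| ^ p) :=
        lintegral_const_mul' _ _ hEm
    _ ≤ (volume Q')⁻¹ * ∫⁻ x in Q, ENNReal.ofReal ((K * ℓ) ^ e) *
          ∫⁻ y in Q, ENNReal.ofReal (|u x - u y| ^ p / dist x y ^ e) := by
        refine mul_le_mul_right ?_ _
        exact lintegral_mono_ae ((ae_restrict_iff' (measurableSet_closedCube c ℓ)).2
          (Filter.Eventually.of_forall key2))
    _ = (volume Q')⁻¹ * (ENNReal.ofReal ((K * ℓ) ^ e) *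
          ∫⁻ x in Q, ∫⁻ y in Q, ENNReal.ofReal (|u x - u y| ^ p / dist x y ^ e)) := by
        rw [lintegral_const_mul' _ _ ENNReal.ofReal_ne_top]
    _ = ENNReal.ofReal (2 ^ n * K ^ e * ℓ ^ (s * p)) *
          ∫⁻ x in Q, ∫⁻ y in Q, ENNReal.ofReal (|u x - u y| ^ p / dist x y ^ e) := by
        rw [← mul_assoc, hvolQ']
        congr 1
        rw [← ENNReal.ofReal_inv_of_pos (by positivity),
          ← ENNReal.ofReal_mul (by positivity)]
        congr 1
        have h1 : ℓ ^ e = ℓ ^ (n : ℝ) * ℓ ^ (s * p) := by rw [hedef, Real.rpow_add hℓ]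
        have h2 : ((ℓ / 2) ^ n : ℝ) = ℓ ^ (n : ℝ) / 2 ^ n := by
          rw [div_pow, Real.rpow_natCast]
        rw [Real.mul_rpow hK0.le hℓ.le, h1, h2]
        have hln : (0 : ℝ) < ℓ ^ (n : ℝ) := Real.rpow_pos_of_pos hℓ _
        field_simp
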